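/- arXiv:1303.5561 — 4 statements merged into one kernel-verified Lean document; each statement's English description precedes it below -/
import Mathlib

section
/- Let (k_p) be a sequence of positive reals monotonically increasing to infinity. Then there exists a sequence (k'_p) of positive reals monotonically increasing to infinity such that k'_p ≤ k_p for all p, and ∏_{j=1}^{p+q} k'_j ≤ 2^(p+q) · (∏_{j=1}^{p} k'_j) · (∏_{j=1}^{q} k'_j) for all positive integers p, q. -/
noncomputable def kk (k : ℕ → ℝ) : ℕ → ℝ
  | 0 => k 0
  | (n+1) => ((n+1 : ℕ) : ℝ) * (Finset.Icc 1 (n+1)).inf' ⟨1, by simp⟩ (fun j => k j / j)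

lemma kk_succ (k : ℕ → ℝ) (n : ℕ) :
    kk k (n+1) = ((n+1 : ℕ) : ℝ) * (Finset.Icc 1 (n+1)).inf' ⟨1, by simp⟩ (fun j => k j / j) :=
  rfl

lemma kk_pos {k : ℕ → ℝ} (hpos : ∀ p, 0 < k p) (n : ℕ) : 0 < kk k n := by
  match n with
  | 0 => exact hpos 0
  | (n+1) =>
    rw [kk_succ]
    apply mul_pos (by positivity)
    refine (Finset.lt_inf'_iff ..).mpr ?_
    intro i hi
    simp only [Finset.mem_Icc] at hi
    have hi0 : (0:ℝ) < i := by exact_mod_cast hi.1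
    exact div_pos (hpos i) hi0

lemma kk_le {k : ℕ → ℝ} (hpos : ∀ p, 0 < k p) (n : ℕ) : kk k n ≤ k n := by
  match n with
  | 0 => exact le_rfl
  | (n+1) =>
    rw [kk_succ]
    have h1 : (Finset.Icc 1 (n+1)).inf' ⟨1, by simp⟩ (fun j => k j / j) ≤ k (n+1) / ((n+1:ℕ):ℝ) :=
      Finset.inf'_le _ (by simp)
    have hpos' : (0:ℝ) < ((n+1:ℕ):ℝ) := by positivity
    calc ((n+1:ℕ):ℝ) * (Finset.Icc 1 (n+1)).inf' ⟨1, by simp⟩ (fun j => k j / j)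
        ≤ ((n+1:ℕ):ℝ) * (k (n+1) / ((n+1:ℕ):ℝ)) := mul_le_mul_of_nonneg_left h1 hpos'.le
      _ = k (n+1) := by field_simp

lemma kk_ratio {k : ℕ → ℝ} {j m : ℕ} (hj : 1 ≤ j) (hjm : j ≤ m) :
    (j : ℝ) * kk k m ≤ (m : ℝ) * kk k j := by
  obtain ⟨j', rfl⟩ : ∃ j', j = j' + 1 := ⟨j - 1, by omega⟩
  obtain ⟨m', rfl⟩ : ∃ m', m = m' + 1 := ⟨m - 1, by omega⟩
  have hsub : Finset.Icc 1 (j'+1) ⊆ Finset.Icc 1 (m'+1) :=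
    Finset.Icc_subset_Icc le_rfl (by omega)
  have hinf : (Finset.Icc 1 (m'+1)).inf' ⟨1, by simp⟩ (fun j => k j / j) ≤
      (Finset.Icc 1 (j'+1)).inf' ⟨1, by simp⟩ (fun j => k j / j) :=
    Finset.inf'_mono _ hsub _
  rw [kk_succ, kk_succ, ← mul_assoc, ← mul_assoc, mul_comm ((j'+1:ℕ):ℝ) ((m'+1:ℕ):ℝ)]
  exact mul_le_mul_of_nonneg_left hinf (by positivity)

lemma kk_mono {k : ℕ → ℝ} (hpos : ∀ p, 0 < k p) (hmono : Monotone k) : Monotone (kk k) := by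
  apply monotone_nat_of_le_succ
  intro n
  match n with
  | 0 =>
    show k 0 ≤ kk k 1
    have h1 : kk k 1 = k 1 := by rw [kk_succ]; simp
    rw [h1]; exact hmono (by norm_num)
  | (n+1) =>
    obtain ⟨j₀, hj₀mem, hj₀⟩ := Finset.exists_mem_eq_inf' (⟨1, by simp⟩ :
        (Finset.Icc 1 (n+2)).Nonempty) (fun j => k j / j)
    simp only [Finset.mem_Icc] at hj₀mem
    have hj₀pos : (0:ℝ) < (j₀:ℝ) := by exact_mod_cast hj₀mem.1
    have hkk2 : kk k (n+2) = ((n+2:ℕ):ℝ) * (k j₀ / j₀) := by rw [kk_succ, hj₀]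
    rcases Nat.lt_or_ge j₀ (n+2) with hlt | hge
    · have hle : kk k (n+1) ≤ ((n+1:ℕ):ℝ) * (k j₀ / j₀) := by
        rw [kk_succ]
        apply mul_le_mul_of_nonneg_left _ (by positivity)
        exact Finset.inf'_le _ (Finset.mem_Icc.mpr ⟨hj₀mem.1, by omega⟩)
      refine hle.trans ?_
      rw [hkk2]
      apply mul_le_mul_of_nonneg_right _ (div_pos (hpos j₀) hj₀pos).le
      exact_mod_cast Nat.le_succ (n+1)
    · have hj₀eq : j₀ = n + 2 := le_antisymm hj₀mem.2 hge
      subst hj₀eq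
      have h2 : kk k (n+2) = k (n+2) := by rw [hkk2]; field_simp
      rw [h2]
      exact (kk_le hpos (n+1)).trans (hmono (Nat.le_succ _))

lemma kk_tendsto {k : ℕ → ℝ} (hpos : ∀ p, 0 < k p)
    (htend : Filter.Tendsto k Filter.atTop Filter.atTop) :
    Filter.Tendsto (kk k) Filter.atTop Filter.atTop := by
  rw [Filter.tendsto_atTop]
  intro M
  obtain ⟨N, hN⟩ := (Filter.tendsto_atTop.mp htend M).exists_forall_of_atTop
  set N' := max N 1 with hN'
  have hN'ne : N' ≠ 0 := by omega
  set c := (Finset.Icc 1 N').inf' ⟨1, by simp; omega⟩ (fun j => k j / j) with hc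
  have hcpos : 0 < c := by
    rw [hc]; refine (Finset.lt_inf'_iff ..).mpr ?_
    intro i hi
    simp only [Finset.mem_Icc] at hi
    exact div_pos (hpos i) (by exact_mod_cast hi.1)
  rw [Filter.eventually_atTop]
  refine ⟨max N' ⌈M / c⌉₊, fun n hn => ?_⟩
  have hn1 : 1 ≤ n := by
    have := le_trans (le_max_left N' _) hn
    omega
  obtain ⟨n', rfl⟩ : ∃ n', n = n' + 1 := ⟨n - 1, by omega⟩
  obtain ⟨j₀, hj₀mem, hj₀⟩ := Finset.exists_mem_eq_inf' (⟨1, by simp⟩ :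
      (Finset.Icc 1 (n'+1)).Nonempty) (fun j => k j / j)
  simp only [Finset.mem_Icc] at hj₀mem
  have hkk : kk k (n'+1) = ((n'+1:ℕ):ℝ) * (k j₀ / j₀) := by rw [kk_succ, hj₀]
  have hj₀pos : (0:ℝ) < j₀ := by exact_mod_cast hj₀mem.1
  rcases Nat.lt_or_ge j₀ N with hlt | hge
  · have hcle : c ≤ k j₀ / j₀ := by
      rw [hc]
      exact Finset.inf'_le _ (Finset.mem_Icc.mpr ⟨hj₀mem.1, le_max_of_le_left hlt.le⟩)
    have hnc : (M / c) ≤ ((n'+1:ℕ):ℝ) := by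
      have h1 : ⌈M / c⌉₊ ≤ n' + 1 := le_trans (le_max_right N' _) hn
      exact_mod_cast (Nat.ceil_le.mp h1)
    calc M = (M / c) * c := by field_simp
      _ ≤ ((n'+1:ℕ):ℝ) * c := mul_le_mul_of_nonneg_right hnc hcpos.le
      _ ≤ ((n'+1:ℕ):ℝ) * (k j₀ / j₀) := mul_le_mul_of_nonneg_left hcle (by positivity)
      _ = kk k (n'+1) := hkk.symm
  · calc M ≤ k j₀ := hN j₀ hge
      _ = (j₀ : ℝ) * (k j₀ / j₀) := by field_simp
      _ ≤ ((n'+1:ℕ):ℝ) * (k j₀ / j₀) := by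
          apply mul_le_mul_of_nonneg_right _ (div_pos (hpos j₀) hj₀pos).le
          exact_mod_cast hj₀mem.2
      _ = kk k (n'+1) := hkk.symm

lemma prod_ratio (p q : ℕ) :
    ∏ j ∈ Finset.Icc 1 q, (((p:ℝ) + j) / j) = ((p+q).choose q : ℝ) := by
  induction q with
  | zero => simp
  | succ q ih =>
    rw [Finset.prod_Icc_succ_top (by omega : 1 ≤ q + 1), ih]
    have key : (p + q + 1) * ((p+q).choose q) = ((p+q+1).choose (q+1)) * (q+1) :=
      Nat.add_one_mul_choose_eq (p+q) q
    have hkey : ((p:ℝ) + q + 1) * ((p+q).choose q : ℝ) = (((p+q+1).choose (q+1) : ℕ) : ℝ) * ((q:ℝ)+1) := by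
      exact_mod_cast congrArg (fun x : ℕ => (x : ℝ)) key
    have hq1 : ((q:ℝ)+1) ≠ 0 := by positivity
    rw [show (p+(q+1)) = (p+q+1) by ring]
    push_cast
    rw [mul_comm, div_mul_eq_mul_div, div_eq_iff hq1]
    nlinarith [hkey]

lemma choose_le_two_pow' (n r : ℕ) : n.choose r ≤ 2 ^ n := by
  rcases Nat.lt_or_ge n r with h | h
  · rw [Nat.choose_eq_zero_of_lt h]; positivity
  · calc n.choose r ≤ ∑ i ∈ Finset.range (n+1), n.choose i :=
        Finset.single_le_sum (fun i _ => Nat.zero_le _) (Finset.mem_range.mpr (by omega))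
      _ = 2 ^ n := Nat.sum_range_choose n

theorem exists_subordinate_sequence (k : ℕ → ℝ) (hpos : ∀ p, 0 < k p)
    (hmono : Monotone k) (htend : Filter.Tendsto k Filter.atTop Filter.atTop) :
    ∃ k' : ℕ → ℝ, (∀ p, 0 < k' p) ∧ Monotone k' ∧
      Filter.Tendsto k' Filter.atTop Filter.atTop ∧ (∀ p, k' p ≤ k p) ∧
      ∀ p q : ℕ, 1 ≤ p → 1 ≤ q →
        (∏ j ∈ Finset.Icc 1 (p + q), k' j) ≤
          2 ^ (p + q) * (∏ j ∈ Finset.Icc 1 p, k' j) * ∏ j ∈ Finset.Icc 1 q, k' j := by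
  refine ⟨kk k, kk_pos hpos, kk_mono hpos hmono, kk_tendsto hpos htend,
      kk_le hpos, fun p q hp hq => ?_⟩
  have hIcc : ∀ n : ℕ, Finset.Icc 1 n = Finset.Ioc 0 n := fun n => rfl
  have hsplit : (∏ j ∈ Finset.Icc 1 (p+q), kk k j) =
      (∏ j ∈ Finset.Icc 1 p, kk k j) * ∏ j ∈ Finset.Ioc p (p+q), kk k j := by
    rw [hIcc, hIcc, Finset.prod_Ioc_consecutive _ (Nat.zero_le p) (Nat.le_add_right p q)]
  have hmap : (∏ j ∈ Finset.Ioc p (p+q), kk k j) = ∏ j ∈ Finset.Icc 1 q, kk k (p + j) := by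
    rw [hIcc, show Finset.Ioc p (p+q) = (Finset.Ioc 0 q).map (addLeftEmbedding p) by
      rw [Finset.map_add_left_Ioc]; simp, Finset.prod_map]
    rfl
  have hbound : (∏ j ∈ Finset.Icc 1 q, kk k (p + j)) ≤
      (∏ j ∈ Finset.Icc 1 q, (((p:ℝ) + j) / j * kk k j)) := by
    apply Finset.prod_le_prod (fun j _ => (kk_pos hpos _).le)
    intro j hj
    simp only [Finset.mem_Icc] at hj
    have hjpos : (0:ℝ) < j := by exact_mod_cast hj.1
    rw [div_mul_eq_mul_div, le_div_iff₀ hjpos]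
    calc kk k (p+j) * j = (j:ℝ) * kk k (p+j) := by ring
      _ ≤ ((p+j:ℕ):ℝ) * kk k j := kk_ratio hj.1 (Nat.le_add_left j p)
      _ = ((p:ℝ) + j) * kk k j := by push_cast; ring
  have hsplit2 : (∏ j ∈ Finset.Icc 1 q, (((p:ℝ) + j) / j * kk k j)) =
      ((p+q).choose q : ℝ) * ∏ j ∈ Finset.Icc 1 q, kk k j := by
    rw [Finset.prod_mul_distrib, prod_ratio]
  have hchoose : ((p+q).choose q : ℝ) ≤ 2 ^ (p+q) := by
    exact_mod_cast choose_le_two_pow' (p+q) q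
  have hPpos : (0:ℝ) < ∏ j ∈ Finset.Icc 1 p, kk k j :=
    Finset.prod_pos (fun j _ => kk_pos hpos j)
  have hQpos : (0:ℝ) ≤ ∏ j ∈ Finset.Icc 1 q, kk k j :=
    (Finset.prod_pos (fun j _ => kk_pos hpos j)).le
  calc (∏ j ∈ Finset.Icc 1 (p+q), kk k j)
      = (∏ j ∈ Finset.Icc 1 p, kk k j) * ∏ j ∈ Finset.Icc 1 q, kk k (p + j) := by
        rw [hsplit, hmap]
    _ ≤ (∏ j ∈ Finset.Icc 1 p, kk k j) *
        (((p+q).choose q : ℝ) * ∏ j ∈ Finset.Icc 1 q, kk k j) := by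
        apply mul_le_mul_of_nonneg_left _ hPpos.le
        rw [← hsplit2]; exact hbound
    _ ≤ (∏ j ∈ Finset.Icc 1 p, kk k j) *
        ((2:ℝ) ^ (p+q) * ∏ j ∈ Finset.Icc 1 q, kk k j) := by
        apply mul_le_mul_of_nonneg_left _ hPpos.le
        exact mul_le_mul_of_nonneg_right hchoose hQpos
    _ = 2 ^ (p + q) * (∏ j ∈ Finset.Icc 1 p, kk k j) * ∏ j ∈ Finset.Icc 1 q, kk k j := by
        ring
end

section
/- Let k > 0 and let z = x + iy ∈ ℂ^d with |x| > 2|y|, where √(z²) denotes the principal branch of the square root applied to z² = z₁²+···+z_d² (noting z² ∉ (-∞,0] under this hypothesis). Then |e^(k√(z²)) + e^(-k√(z²))| ≥ e^(c₁ k √(|x|²-|y|²)) - 1 > 0, where c₁ = √((3+√34)/(2√34)). -/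
theorem cosh_sqrt_lower_bound (d : ℕ) (k : ℝ) (hk : 0 < k) (z : Fin d → ℂ)
    (h : 2 * Real.sqrt (∑ j, (z j).im ^ 2) < Real.sqrt (∑ j, (z j).re ^ 2)) :
    Real.exp (Real.sqrt ((3 + Real.sqrt 34) / (2 * Real.sqrt 34)) * k *
        Real.sqrt ((∑ j, (z j).re ^ 2) - ∑ j, (z j).im ^ 2)) - 1 ≤
      ‖Complex.exp (k * (∑ j, (z j) ^ 2) ^ ((1 : ℂ) / 2)) +
        Complex.exp (-(k * (∑ j, (z j) ^ 2) ^ ((1 : ℂ) / 2)))‖ ∧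
    0 < Real.exp (Real.sqrt ((3 + Real.sqrt 34) / (2 * Real.sqrt 34)) * k *
        Real.sqrt ((∑ j, (z j).re ^ 2) - ∑ j, (z j).im ^ 2)) - 1 := by
  set X := ∑ j, (z j).re ^ 2 with hXdef
  set Y := ∑ j, (z j).im ^ 2 with hYdef
  have hX0 : 0 ≤ X := Finset.sum_nonneg fun j _ => sq_nonneg _
  have hY0 : 0 ≤ Y := Finset.sum_nonneg fun j _ => sq_nonneg _
  have hYX : Y < X := by
    nlinarith [Real.sq_sqrt hX0, Real.sq_sqrt hY0, Real.sqrt_nonneg X, Real.sqrt_nonneg Y]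
  set S : ℂ := ∑ j, (z j) ^ 2 with hSdef
  have hSre : S.re = X - Y := by
    simp [hSdef, hXdef, hYdef, Complex.re_sum, sq, Complex.mul_re,
      ← Finset.sum_sub_distrib]
  set w : ℂ := S ^ ((1 : ℂ) / 2) with hwdef
  have hwre : w.re = Real.sqrt ((‖S‖ + S.re) / 2) := by
    rw [hwdef, one_div, Complex.cpow_inv_two_re]
  have hre_le : S.re ≤ ‖S‖ := Complex.re_le_norm S
  have hge : Real.sqrt (X - Y) ≤ w.re := by
    rw [hwre]
    apply Real.sqrt_le_sqrt
    rw [hSre] at hre_le ⊢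
    linarith
  have hwre0 : 0 ≤ w.re := (Real.sqrt_nonneg _).trans hge
  -- c₁ ≤ 1
  have h34 : (3 : ℝ) ≤ Real.sqrt 34 := by
    have h9 : Real.sqrt 9 = 3 := by
      rw [show (9:ℝ) = 3 ^ 2 by norm_num, Real.sqrt_sq (by norm_num)]
    calc (3:ℝ) = Real.sqrt 9 := h9.symm
      _ ≤ Real.sqrt 34 := Real.sqrt_le_sqrt (by norm_num)
  have h34pos : (0 : ℝ) < Real.sqrt 34 := by linarith
  have hc1 : Real.sqrt ((3 + Real.sqrt 34) / (2 * Real.sqrt 34)) ≤ 1 := by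
    rw [show (1:ℝ) = Real.sqrt 1 by simp]
    apply Real.sqrt_le_sqrt
    rw [div_le_one (by positivity)]
    linarith
  have hc1pos : 0 < Real.sqrt ((3 + Real.sqrt 34) / (2 * Real.sqrt 34)) :=
    Real.sqrt_pos.mpr (by positivity)
  have hsqrtXY : 0 < Real.sqrt (X - Y) := Real.sqrt_pos.mpr (by linarith)
  -- key exponent inequality
  have hexp_le : Real.sqrt ((3 + Real.sqrt 34) / (2 * Real.sqrt 34)) * k *
      Real.sqrt (X - Y) ≤ k * w.re := by
    calc Real.sqrt ((3 + Real.sqrt 34) / (2 * Real.sqrt 34)) * k * Real.sqrt (X - Y)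
        ≤ 1 * k * Real.sqrt (X - Y) := by
          apply mul_le_mul_of_nonneg_right _ hsqrtXY.le
          exact mul_le_mul_of_nonneg_right hc1 hk.le
      _ = k * Real.sqrt (X - Y) := by ring
      _ ≤ k * w.re := mul_le_mul_of_nonneg_left hge hk.le
  have habs1 : ‖Complex.exp (k * w)‖ = Real.exp (k * w.re) := by
    rw [Complex.norm_exp]; congr 1
    simp [Complex.mul_re]
  have habs2 : ‖Complex.exp (-(k * w))‖ = Real.exp (-(k * w.re)) := by
    rw [Complex.norm_exp]; congr 1
    simp [Complex.mul_re]
  have hsub : Real.exp (k * w.re) - Real.exp (-(k * w.re)) ≤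
      ‖Complex.exp (k * w) + Complex.exp (-(k * w))‖ := by
    have h1 := norm_add_le (Complex.exp (k * w) + Complex.exp (-(k * w)))
      (-Complex.exp (-(k * w)))
    simp only [add_neg_cancel_right, norm_neg] at h1
    rw [habs1, habs2] at h1
    linarith
  have hkw0 : 0 ≤ k * w.re := mul_nonneg hk.le hwre0
  have hexpneg : Real.exp (-(k * w.re)) ≤ 1 := Real.exp_le_one_iff.mpr (by linarith)
  constructor
  · calc Real.exp (Real.sqrt ((3 + Real.sqrt 34) / (2 * Real.sqrt 34)) * k *
          Real.sqrt (X - Y)) - 1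
        ≤ Real.exp (k * w.re) - Real.exp (-(k * w.re)) := by
          have := Real.exp_le_exp.mpr hexp_le
          linarith
      _ ≤ _ := hsub
  · have : 0 < Real.sqrt ((3 + Real.sqrt 34) / (2 * Real.sqrt 34)) * k *
        Real.sqrt (X - Y) := by positivity
    linarith [Real.add_one_le_exp (Real.sqrt ((3 + Real.sqrt 34) / (2 * Real.sqrt 34)) * k * Real.sqrt (X - Y))]
end

section
/- For every w = ξ + iη ∈ ℂ^d with |η| < 1/4, writing √(1+w²) for the principal branch applied to 1 + w² (where w² = w₁²+···+w_d²), one has Re(√(1+w²)) ≥ √(1 + |ξ|² - |η|²). -/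
theorem re_sqrt_one_add_sq_ge (d : ℕ) (w : Fin d → ℂ)
    (h : Real.sqrt (∑ j, (w j).im ^ 2) < 1 / 4) :
    Real.sqrt (1 + (∑ j, (w j).re ^ 2) - ∑ j, (w j).im ^ 2) ≤
      ((1 + ∑ j, (w j) ^ 2) ^ ((1 : ℂ) / 2)).re := by
  set z : ℂ := 1 + ∑ j, (w j) ^ 2 with hz
  have hre : z.re = 1 + (∑ j, (w j).re ^ 2) - ∑ j, (w j).im ^ 2 := by
    have hterm : ∀ x, (w x ^ 2).re = (w x).re ^ 2 - (w x).im ^ 2 := fun x => by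
      rw [sq, Complex.mul_re]; ring
    simp only [hz, Complex.add_re, Complex.one_re, Complex.re_sum, hterm,
      Finset.sum_sub_distrib]
    ring
  rw [one_div, Complex.cpow_inv_two_re]
  rw [← hre]
  apply Real.sqrt_le_sqrt
  have := Complex.re_le_norm z
  linarith
end

section
/- Let d ≥ 1, l > 0, and let w = ξ + iη ∈ ℂ^d with |η| < 1/(4ld²). Then |Σ_{j=1}^{d} cosh(2ld·w_j)| ≥ (√2/4) · Σ_{j=1}^{d} e^(2ld|ξ_j|); in particular this sum has no zeros in that strip. -/
lemma cosh_re_eq (x y : ℝ) :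
    (Complex.cosh (x + y * Complex.I)).re = Real.cosh x * Real.cos y := by
  rw [Complex.cosh_add, Complex.cosh_mul_I, Complex.sinh_mul_I,
    ← Complex.ofReal_cosh, ← Complex.ofReal_sinh, ← Complex.ofReal_cos, ← Complex.ofReal_sin]
  simp [Complex.cos_ofReal_re]

theorem sum_cosh_complex_lower_bound (d : ℕ) (hd : 1 ≤ d) (l : ℝ) (hl : 0 < l)
    (w : Fin d → ℂ) (h : Real.sqrt (∑ j, (w j).im ^ 2) < 1 / (4 * l * d ^ 2)) :
    Real.sqrt 2 / 4 * ∑ j, Real.exp (2 * l * d * |(w j).re|) ≤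
      ‖∑ j, Complex.cosh (2 * l * d * w j)‖ := by
  have hd0 : (0:ℝ) < d := by exact_mod_cast hd
  have hd1 : (1:ℝ) ≤ d := by exact_mod_cast hd
  have him : ∀ j, |(w j).im| < 1 / (4 * l * d ^ 2) := by
    intro j
    have h1 : (w j).im ^ 2 ≤ ∑ i, (w i).im ^ 2 :=
      Finset.single_le_sum (f := fun i => (w i).im ^ 2) (fun i _ => sq_nonneg _)
        (Finset.mem_univ j)
    calc |(w j).im| = Real.sqrt ((w j).im ^ 2) := (Real.sqrt_sq_eq_abs _).symm
      _ ≤ Real.sqrt (∑ i, (w i).im ^ 2) := Real.sqrt_le_sqrt h1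
      _ < _ := h
  have key : ∀ j, Real.sqrt 2 / 4 * Real.exp (2 * l * d * |(w j).re|) ≤
      (Complex.cosh (2 * l * d * w j)).re := by
    intro j
    have hz : ((2:ℂ) * l * d * w j) =
        ((2 * l * d * (w j).re : ℝ) : ℂ) + ((2 * l * d * (w j).im : ℝ) : ℝ) * Complex.I := by
      apply Complex.ext <;> simp
    rw [hz, cosh_re_eq]
    -- bound on the imaginary argument
    have himj : |2 * l * d * (w j).im| ≤ 1 / 2 := by
      have h2 : |(w j).im| ≤ 1 / (4 * l * d ^ 2) := (him j).le
      have hpos : (0:ℝ) < 4 * l * d ^ 2 := by positivity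
      calc |2 * l * d * (w j).im| = 2 * l * d * |(w j).im| := by
            rw [abs_mul, abs_of_pos (by positivity : (0:ℝ) < 2 * l * d)]
        _ ≤ 2 * l * d * (1 / (4 * l * d ^ 2)) := by
            apply mul_le_mul_of_nonneg_left h2 (by positivity)
        _ = 1 / (2 * d) := by field_simp; ring
        _ ≤ 1 / 2 := by
            apply div_le_div_of_nonneg_left (by norm_num) (by norm_num)
            linarith
    have hcos : Real.sqrt 2 / 2 ≤ Real.cos (2 * l * d * (w j).im) := by
      have h1 : 1 - (2 * l * d * (w j).im) ^ 2 / 2 ≤ Real.cos (2 * l * d * (w j).im) :=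
        Real.one_sub_sq_div_two_le_cos
      have h2 : (2 * l * d * (w j).im) ^ 2 ≤ (1/2)^2 := by
        rw [← sq_abs]
        exact pow_le_pow_left₀ (abs_nonneg _) himj 2
      have h3 : Real.sqrt 2 ≤ 3 / 2 := by
        rw [show (3:ℝ)/2 = Real.sqrt ((3/2)^2) by rw [Real.sqrt_sq]; norm_num]
        apply Real.sqrt_le_sqrt; norm_num
      nlinarith
    have hcosh : Real.exp (2 * l * d * |(w j).re|) / 2 ≤ Real.cosh (2 * l * d * (w j).re) := by
      rw [← Real.cosh_abs, show |2 * l * d * (w j).re| = 2 * l * d * |(w j).re| by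
        rw [abs_mul, abs_of_pos (by positivity : (0:ℝ) < 2 * l * d)]]
      rw [Real.cosh_eq]
      have := Real.exp_pos (-(2 * l * d * |(w j).re|))
      linarith
    calc Real.sqrt 2 / 4 * Real.exp (2 * l * d * |(w j).re|)
        = (Real.exp (2 * l * d * |(w j).re|) / 2) * (Real.sqrt 2 / 2) := by ring
      _ ≤ Real.cosh (2 * l * d * (w j).re) * Real.cos (2 * l * d * (w j).im) := by
          apply mul_le_mul hcosh hcos (by positivity) (le_trans (by positivity) hcosh)
  calc Real.sqrt 2 / 4 * ∑ j, Real.exp (2 * l * d * |(w j).re|)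
      = ∑ j, Real.sqrt 2 / 4 * Real.exp (2 * l * d * |(w j).re|) := Finset.mul_sum _ _ _
    _ ≤ ∑ j, (Complex.cosh (2 * l * d * w j)).re :=
        Finset.sum_le_sum fun j _ => key j
    _ = (∑ j, Complex.cosh (2 * l * d * w j)).re := (Complex.re_sum _ _).symm
    _ ≤ ‖∑ j, Complex.cosh (2 * l * d * w j)‖ := Complex.re_le_norm _
end
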